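/- Claim 1.5 (random homogenization): Let n⊗ ≥ n* ≥ 1, k(*) ≥ 1, and let m be a natural number (sufficiently large relative to n⊗ and k(*)). Let A'' be a finite subset of ℕ, let j*_{n*} < j*_{n*+1} < ⋯ < j*_{n⊗-1} be natural numbers all greater than max(A''), and set w* = {j*_ℓ : n* ≤ ℓ < n⊗}. For each k < k(*) let f_k be a function defined on all n⊗-element subsets of A'' ∪ w* (arbitrary codomain), let g_k map [A'']^{n*} into subsets of {n*+1, …, n⊗−1}, and let h_k : [A'']^{n*} → ℕ. Assume: (triv) for each k < k(*) and u ∈ [A'']^{n*}, either h_k(u) ≤ min{ℓ ∈ A'' : ℓ > max(u)} or h_k(u) > max(A''); (c) if w_1, w_2 ∈ [A''_{>sup(u)}]^{n⊗−n*}, {i ∈ w_1 : n* + |{j ∈ w_1 : j < i}| ∈ g_k(u)} = {i ∈ w_2 : n* + |{j ∈ w_2 : j < i}| ∈ g_k(u)}, and (min(w_1 ∪ w_2) < h_k(u) implies min(w_1) = min(w_2)), then f_k(u ∪ w_1) = f_k(u ∪ w_2); (d) if w_1 ∪ w_2 ∪ {i, j} ⊆ A'', u < w_1 < i < j < w_2,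 |w_1 ∪ w_2| = n⊗ − n* − 1, then: if w_1 ≠ ∅ then f_k(u ∪ w_1 ∪ {i} ∪ w_2) = f_k(u ∪ w_1 ∪ {j} ∪ w_2) iff |u ∪ w_1| ∉ g_k(u), and if w_1 = ∅ then f_k(u ∪ {i} ∪ w_2) = f_k(u ∪ {j} ∪ w_2) iff h_k(u) ≤ i; (e) for neighbors u_0, u_1 ∈ [A'']^{n*} and w ∈ [A''_{>max(u_0 ∪ u_1)}]^{n⊗−n*}: f_k(u_0 ∪ w) = f_k(u_1 ∪ w) iff f_k(u_0 ∪ w*) = f_k(u_1 ∪ w*); (size) m^{2n⊗−n*} · (2n⊗ − n*) · C(2(n⊗−n*)−1, n⊗−n*) · k(*) ≤ |A''|. Then there is A* ∈ [A'']^m such that for every k < k(*), u ∈ [A*]^{n*} and w_1, w_2 ∈ [A*_{>sup(u)}]^{n⊗−n*}: f_k(u ∪ w_1) = f_k(u ∪ w_2) if and only if {i ∈ w_1 : n* + |{j ∈ w_1 : j < i}| ∈ g'_k(u)} = {i ∈ w_2 : n* + |{j ∈ w_2 : j < i}| ∈ g'_k(u)}, where g'_k(u) = g_k(u) if h_k(u)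 ≤ min{ℓ ∈ A'' : ℓ > max(u)} and g'_k(u) = g_k(u) ∪ {n*} otherwise. -/

import Mathlib

/-- Finite subsets `u, v` of `ℕ` are neighbors: same size, they differ in exactly
one element, and the differing elements sit in the same position relative to the
common part. -/
def Neighbors (u v : Finset ℕ) : Prop :=
  u.card = v.card ∧ (u \ v).card = 1 ∧
    ∀ k ∈ u \ v, ∀ l ∈ v \ u, ∀ m ∈ u ∩ v, (k < m ↔ l < m)

/-- `above A u` is `A_{> sup u}`, the set of members of `A` greater than every
member of `u` (with the convention `A_{> sup ∅} = A`). -/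
def above (A u : Finset ℕ) : Finset ℕ := A.filter fun j => ∀ x ∈ u, x < j

/- ----------------------------------------------------------------
   Auxiliary machinery for the proof of random homogenization.
----------------------------------------------------------------- -/

private lemma mem_above {A u : Finset ℕ} {y : ℕ} :
    y ∈ above A u ↔ y ∈ A ∧ ∀ x ∈ u, x < y := by
  simp [above]

private lemma above_subset {A u : Finset ℕ} : above A u ⊆ A :=
  Finset.filter_subset _ _

/-- The "corrected" pattern positions `g'_k(u)`. -/
private def gset (nstar : ℕ) (A'' : Finset ℕ) (g : ℕ → Finset ℕ → Finset ℕ)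
    (h : ℕ → Finset ℕ → ℕ) (k : ℕ) (u : Finset ℕ) : Finset ℕ :=
  if ∀ ℓ ∈ above A'' u, h k u ≤ ℓ then g k u else insert nstar (g k u)

/-- The pattern of `w` with respect to position set `G`. -/
private def patt (nstar : ℕ) (G w : Finset ℕ) : Finset ℕ :=
  w.filter fun i => nstar + (w.filter (· < i)).card ∈ G

private lemma patt_subset (nstar : ℕ) (G w : Finset ℕ) : patt nstar G w ⊆ w :=
  Finset.filter_subset _ _

private lemma filter_lt_erase (w : Finset ℕ) (x : ℕ) :
    ((w.erase x).filter (· < x)) = w.filter (· < x) := by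
  ext a
  simp only [Finset.mem_filter, Finset.mem_erase]
  constructor
  · rintro ⟨⟨-, ha⟩, hlt⟩; exact ⟨ha, hlt⟩
  · rintro ⟨ha, hlt⟩; exact ⟨⟨Nat.ne_of_lt hlt, ha⟩, hlt⟩

private lemma initseg {w : Finset ℕ} {z z' : ℕ}
    (hc : (w.filter (· < z)).card = (w.filter (· < z')).card) :
    w.filter (· < z) = w.filter (· < z') := by
  rcases le_total z z' with hle | hle
  · refine Finset.eq_of_subset_of_card_le ?_ (le_of_eq hc.symm)
    intro a ha
    have h2 := Finset.mem_filter.1 ha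
    exact Finset.mem_filter.2 ⟨h2.1, lt_of_lt_of_le h2.2 hle⟩
  · symm
    refine Finset.eq_of_subset_of_card_le ?_ (le_of_eq hc)
    intro a ha
    have h2 := Finset.mem_filter.1 ha
    exact Finset.mem_filter.2 ⟨h2.1, lt_of_lt_of_le h2.2 hle⟩

/-- index encoding of a subset of `S'` as positions in the sorted list of `S'`. -/
private def enc (S' W : Finset ℕ) : Finset ℕ :=
  W.image fun a => (S'.sort (· ≤ ·)).idxOf a

private lemma enc_subset_range {S' W : Finset ℕ} {n : ℕ} (hW : W ⊆ S')
    (hcard : S'.card = n) : enc S' W ⊆ Finset.range n := by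
  intro b hb
  obtain ⟨a, ha, rfl⟩ := Finset.mem_image.1 hb
  have hmem : a ∈ S'.sort (· ≤ ·) := (Finset.mem_sort _).2 (hW ha)
  have := List.idxOf_lt_length_iff.2 hmem
  rw [Finset.length_sort, hcard] at this
  exact Finset.mem_range.2 this

private lemma enc_card {S' W : Finset ℕ} (hW : W ⊆ S') :
    (enc S' W).card = W.card := by
  apply Finset.card_image_of_injOn
  intro a ha b hb hab
  have hma : a ∈ S'.sort (· ≤ ·) := (Finset.mem_sort _).2 (hW ha)
  have hmb : b ∈ S'.sort (· ≤ ·) := (Finset.mem_sort _).2 (hW hb)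
  exact (List.idxOf_inj hma).1 hab

private lemma enc_inj {S' W V : Finset ℕ} (hW : W ⊆ S') (hV : V ⊆ S')
    (h : enc S' W = enc S' V) : W = V := by
  have mono : ∀ W V : Finset ℕ, W ⊆ S' → V ⊆ S' → enc S' W = enc S' V → W ⊆ V := by
    intro W V hW hV h a ha
    have : (S'.sort (· ≤ ·)).idxOf a ∈ enc S' V := by
      rw [← h]; exact Finset.mem_image_of_mem _ ha
    obtain ⟨b, hb, hba⟩ := Finset.mem_image.1 this
    have hma : a ∈ S'.sort (· ≤ ·) := (Finset.mem_sort _).2 (hW ha)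
    have hmb : b ∈ S'.sort (· ≤ ·) := (Finset.mem_sort _).2 (hV hb)
    rwa [(List.idxOf_inj hmb).1 hba] at hb
  exact Finset.Subset.antisymm (mono _ _ hW hV h) (mono _ _ hV hW h.symm)

private lemma patt_min_mem {nstar : ℕ} {G : Finset ℕ} (hns : nstar ∉ G)
    (w : Finset ℕ) (hw : w.Nonempty) :
    w.min' hw ∈ patt nstar (insert nstar G) w ∧
      patt nstar G w = (patt nstar (insert nstar G) w).erase (w.min' hw) := by
  have hminfil : (w.filter (· < w.min' hw)) = ∅ :=
    Finset.filter_eq_empty_iff.2 (fun {b} hb => not_lt.2 (Finset.min'_le w b hb))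
  constructor
  · refine Finset.mem_filter.2 ⟨Finset.min'_mem _ _, ?_⟩
    rw [hminfil]
    simp
  · ext a
    simp only [patt, Finset.mem_erase, Finset.mem_filter, Finset.mem_insert]
    constructor
    · rintro ⟨haw, hag⟩
      have hane : nstar + (w.filter (· < a)).card ≠ nstar := by
        intro hcon
        exact hns (hcon ▸ hag)
      refine ⟨?_, haw, Or.inr hag⟩
      intro hamin
      apply hane
      rw [hamin, hminfil]
      simp
    · rintro ⟨hamin, haw, hor⟩
      rcases hor with heq | hg
      · exfalso
        have hc0 : (w.filter (· < a)).card = 0 := by omega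
        have hfe : (w.filter (· < a)) = ∅ := Finset.card_eq_zero.1 hc0
        have hle : ∀ b ∈ w, a ≤ b := by
          intro b hb
          by_contra hcon
          have : b ∈ w.filter (· < a) := Finset.mem_filter.2 ⟨hb, by omega⟩
          rw [hfe] at this
          exact absurd this (Finset.notMem_empty b)
        exact hamin (le_antisymm (Finset.le_min' w hw a hle) (Finset.min'_le w a haw))
      · exact ⟨haw, hg⟩

/-- Single–coordinate analysis via hypothesis (d):
moving one element of `w` within its slot changes the value of `f`
iff the corresponding position belongs to the corrected pattern `gset`. -/
private lemma key_core
    (no nstar kstar : ℕ) (A'' : Finset ℕ) {α : Type}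
    (f : ℕ → Finset ℕ → α) (g : ℕ → Finset ℕ → Finset ℕ) (h : ℕ → Finset ℕ → ℕ)
    (hgr : ∀ k < kstar, ∀ u ∈ A''.powersetCard nstar, g k u ⊆ Finset.Ico (nstar + 1) no)
    (htriv : ∀ k < kstar, ∀ u ∈ A''.powersetCard nstar,
        (∀ ℓ ∈ above A'' u, h k u ≤ ℓ) ∨ (∀ ℓ ∈ A'', ℓ < h k u))
    (hd : ∀ k < kstar, ∀ u ∈ A''.powersetCard nstar, ∀ w₁ w₂ : Finset ℕ, ∀ i j : ℕ,
        w₁ ∪ w₂ ∪ {i, j} ⊆ A'' →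
        (∀ x ∈ u, ∀ y ∈ w₁, x < y) → (∀ x ∈ u, x < i) →
        (∀ y ∈ w₁, y < i) → i < j → (∀ y ∈ w₂, j < y) →
        (w₁ ∪ w₂).card = no - nstar - 1 →
        (w₁.Nonempty →
          (f k (u ∪ w₁ ∪ {i} ∪ w₂) = f k (u ∪ w₁ ∪ {j} ∪ w₂) ↔
            (u ∪ w₁).card ∉ g k u)) ∧
        (w₁ = ∅ →
          (f k (u ∪ {i} ∪ w₂) = f k (u ∪ {j} ∪ w₂) ↔ h k u ≤ i)))
    (k : ℕ) (hk : k < kstar) (u : Finset ℕ) (hu : u ∈ A''.powersetCard nstar)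
    (w' : Finset ℕ) (hwA : w' ⊆ above A'' u) (hwc : w'.card = no - nstar - 1)
    (ρ : ℕ) (z z' : ℕ) (hzA : z ∈ A'') (hz'A : z' ∈ A'')
    (hzu : ∀ a ∈ u, a < z) (hz'u : ∀ a ∈ u, a < z')
    (hzw : z ∉ w') (hz'w : z' ∉ w')
    (hrz : (w'.filter (· < z)).card = ρ) (hrz' : (w'.filter (· < z')).card = ρ)
    (hlt : z < z') :
    (f k (u ∪ insert z w') = f k (u ∪ insert z' w') ↔
      nstar + ρ ∉ gset nstar A'' g h k u) := by
  classical
  obtain ⟨huA, hucard⟩ := Finset.mem_powersetCard.1 hu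
  set L := w'.filter (· < z) with hLdef
  set R := w'.filter (fun y => ¬ y < z) with hRdef
  have hLR : L ∪ R = w' := Finset.filter_union_filter_not_eq _ w'
  have hLz' : L = w'.filter (· < z') := initseg (hrz.trans hrz'.symm)
  have hLlt : ∀ y ∈ L, y < z := fun y hy => (Finset.mem_filter.1 hy).2
  have hRgt : ∀ y ∈ R, z' < y := by
    intro y hy
    obtain ⟨hyw, hyn⟩ := Finset.mem_filter.1 hy
    have h1 : ¬ y < z' := by
      intro hcon
      have hymem : y ∈ w'.filter (· < z') := Finset.mem_filter.2 ⟨hyw, hcon⟩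
      rw [← hLz'] at hymem
      exact hyn (Finset.mem_filter.1 hymem).2
    have h2 : y ≠ z' := fun hcon => hz'w (hcon ▸ hyw)
    omega
  have hsubA : ∀ y ∈ w', y ∈ A'' := fun y hy => above_subset (hwA hy)
  have hsub : L ∪ R ∪ {z, z'} ⊆ A'' := by
    apply Finset.union_subset
    · apply Finset.union_subset
      · exact fun y hy => hsubA y (Finset.filter_subset _ _ hy)
      · exact fun y hy => hsubA y (Finset.filter_subset _ _ hy)
    · intro y hy
      rcases Finset.mem_insert.1 hy with rfl | hy
      · exact hzA
      · rw [Finset.mem_singleton] at hy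
        exact hy ▸ hz'A
  have hOrd1 : ∀ x ∈ u, ∀ y ∈ L, x < y := by
    intro x hx y hy
    exact (mem_above.1 (hwA (Finset.filter_subset _ _ hy))).2 x hx
  have hcardLR : (L ∪ R).card = no - nstar - 1 := by rw [hLR]; exact hwc
  have hD := hd k hk u hu L R z z' hsub hOrd1 hzu hLlt hlt hRgt hcardLR
  have hmemw : ∀ a, (a ∈ L ∨ a ∈ R) ↔ a ∈ w' := by
    intro a
    rw [← hLR]
    simp [Finset.mem_union]
  have hsetz : ∀ c : ℕ, u ∪ L ∪ {c} ∪ R = u ∪ insert c w' := by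
    intro c
    ext a
    simp only [Finset.mem_union, Finset.mem_insert, Finset.mem_singleton]
    constructor
    · rintro (((hh | hh) | hh) | hh)
      · exact Or.inl hh
      · exact Or.inr (Or.inr ((hmemw a).1 (Or.inl hh)))
      · exact Or.inr (Or.inl hh)
      · exact Or.inr (Or.inr ((hmemw a).1 (Or.inr hh)))
    · rintro (hh | hh | hh)
      · exact Or.inl (Or.inl (Or.inl hh))
      · exact Or.inl (Or.inr hh)
      · rcases (hmemw a).2 hh with hh2 | hh2
        · exact Or.inl (Or.inl (Or.inr hh2))
        · exact Or.inr hh2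
  have hzab : z ∈ above A'' u := mem_above.2 ⟨hzA, hzu⟩
  have hdisj : Disjoint u L := by
    rw [Finset.disjoint_left]
    intro a ha hal
    exact absurd (hOrd1 a ha a hal) (lt_irrefl a)
  have hucardL : (u ∪ L).card = nstar + ρ := by
    rw [Finset.card_union_of_disjoint hdisj, hucard, hrz]
  by_cases hcond : ∀ ℓ ∈ above A'' u, h k u ≤ ℓ
  · have hg' : gset nstar A'' g h k u = g k u := if_pos hcond
    rw [hg']
    by_cases hρ : ρ = 0
    · have hLe : L = ∅ := Finset.card_eq_zero.1 (by rw [hrz, hρ])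
      have hiff := hD.2 hLe
      have hwR : w' = R := by rw [← hLR, hLe, Finset.empty_union]
      have hsetz2 : ∀ c : ℕ, u ∪ {c} ∪ R = u ∪ insert c w' := by
        intro c
        have := hsetz c
        rwa [hLe, Finset.union_empty] at this
      rw [hsetz2 z, hsetz2 z'] at hiff
      rw [hiff]
      have hhz : h k u ≤ z := hcond z hzab
      have hpng : nstar + ρ ∉ g k u := by
        intro hmem
        have := (Finset.mem_Ico.1 (hgr k hk u hu hmem)).1
        omega
      exact iff_of_true hhz hpng
    · have hLne : L.Nonempty := Finset.card_pos.1 (by rw [hrz]; omega)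
      have hiff := hD.1 hLne
      rw [hsetz z, hsetz z', hucardL] at hiff
      exact hiff
  · have hg' : gset nstar A'' g h k u = insert nstar (g k u) := if_neg hcond
    rw [hg']
    have hbig : ∀ ℓ ∈ A'', ℓ < h k u := (htriv k hk u hu).resolve_left hcond
    by_cases hρ : ρ = 0
    · have hLe : L = ∅ := Finset.card_eq_zero.1 (by rw [hrz, hρ])
      have hiff := hD.2 hLe
      have hsetz2 : ∀ c : ℕ, u ∪ {c} ∪ R = u ∪ insert c w' := by
        intro c
        have := hsetz c
        rwa [hLe, Finset.union_empty] at this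
      rw [hsetz2 z, hsetz2 z'] at hiff
      rw [hiff]
      have hhz : ¬ h k u ≤ z := by
        have := hbig z hzA
        omega
      have hpin : nstar + ρ ∈ insert nstar (g k u) := by
        rw [hρ]
        simp
      exact iff_of_false hhz (not_not_intro hpin)
    · have hLne : L.Nonempty := Finset.card_pos.1 (by rw [hrz]; omega)
      have hiff := hD.1 hLne
      rw [hsetz z, hsetz z', hucardL] at hiff
      rw [hiff]
      constructor
      · intro hng hmem
        rcases Finset.mem_insert.1 hmem with heq | hmem2
        · omega
        · exact hng hmem2
      · intro hng hmem
        exact hng (Finset.mem_insert_of_mem hmem)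

/-- Direction "equal corrected patterns → equal f-values", via hypothesis (c). -/
private lemma dirLeft
    (no nstar kstar : ℕ) (A'' : Finset ℕ) {α : Type}
    (f : ℕ → Finset ℕ → α) (g : ℕ → Finset ℕ → Finset ℕ) (h : ℕ → Finset ℕ → ℕ)
    (hgr : ∀ k < kstar, ∀ u ∈ A''.powersetCard nstar, g k u ⊆ Finset.Ico (nstar + 1) no)
    (hc : ∀ k < kstar, ∀ u ∈ A''.powersetCard nstar,
        ∀ w₁ ∈ (above A'' u).powersetCard (no - nstar),
        ∀ w₂ ∈ (above A'' u).powersetCard (no - nstar),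
          w₁.filter (fun i => nstar + (w₁.filter (· < i)).card ∈ g k u) =
            w₂.filter (fun i => nstar + (w₂.filter (· < i)).card ∈ g k u) →
          ((w₁ ∪ w₂).min < (h k u : WithBot ℕ) → w₁.min = w₂.min) →
          f k (u ∪ w₁) = f k (u ∪ w₂)) :
    ∀ k < kstar, ∀ u ∈ A''.powersetCard nstar,
      ∀ w₁ ∈ (above A'' u).powersetCard (no - nstar),
      ∀ w₂ ∈ (above A'' u).powersetCard (no - nstar),
      patt nstar (gset nstar A'' g h k u) w₁ = patt nstar (gset nstar A'' g h k u) w₂ →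
      f k (u ∪ w₁) = f k (u ∪ w₂) := by
  intro k hk u hu w₁ hw₁ w₂ hw₂ hpatts
  obtain ⟨hw₁A, hw₁c⟩ := Finset.mem_powersetCard.1 hw₁
  obtain ⟨hw₂A, hw₂c⟩ := Finset.mem_powersetCard.1 hw₂
  by_cases hcond : ∀ ℓ ∈ above A'' u, h k u ≤ ℓ
  · have hg' : gset nstar A'' g h k u = g k u := if_pos hcond
    rw [hg'] at hpatts
    apply hc k hk u hu w₁ hw₁ w₂ hw₂ hpatts
    intro hlt
    by_cases he : w₁ ∪ w₂ = ∅
    · obtain ⟨he₁, he₂⟩ := Finset.union_eq_empty.1 he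
      rw [he₁, he₂]
    · exfalso
      have hne : (w₁ ∪ w₂).Nonempty := Finset.nonempty_iff_ne_empty.2 he
      have hmem : (w₁ ∪ w₂).min' hne ∈ above A'' u := by
        rcases Finset.mem_union.1 (Finset.min'_mem _ hne) with hm | hm
        · exact hw₁A hm
        · exact hw₂A hm
      have h2 : h k u ≤ (w₁ ∪ w₂).min' hne := hcond _ hmem
      have h3 : ((h k u : ℕ) : WithBot ℕ) ≤ (((w₁ ∪ w₂).min' hne : ℕ) : WithBot ℕ) := by
        exact_mod_cast h2
      have h4 : ¬ (((w₁ ∪ w₂).min' hne : WithTop ℕ) < ((h k u : ℕ) : WithBot ℕ)) := by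
        intro hcon
        exact absurd h2 (not_le.2 (WithTop.coe_lt_coe.1 hcon))
      rw [← Finset.coe_min' hne] at hlt
      exact h4 hlt
  · have hg' : gset nstar A'' g h k u = insert nstar (g k u) := if_neg hcond
    rw [hg'] at hpatts
    by_cases hr0 : no - nstar = 0
    · have he₁ : w₁ = ∅ := Finset.card_eq_zero.1 (by omega)
      have he₂ : w₂ = ∅ := Finset.card_eq_zero.1 (by omega)
      rw [he₁, he₂]
    · have hne₁ : w₁.Nonempty := Finset.card_pos.1 (by omega)
      have hne₂ : w₂.Nonempty := Finset.card_pos.1 (by omega)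
      have hnsg : nstar ∉ g k u := by
        intro hmem
        have := (Finset.mem_Ico.1 (hgr k hk u hu hmem)).1
        omega
      obtain ⟨hm₁, hp₁⟩ := patt_min_mem hnsg w₁ hne₁
      obtain ⟨hm₂, hp₂⟩ := patt_min_mem hnsg w₂ hne₂
      have hPne : (patt nstar (insert nstar (g k u)) w₁).Nonempty := ⟨_, hm₁⟩
      have hmineq : w₁.min' hne₁ = w₂.min' hne₂ := by
        apply le_antisymm
        · apply Finset.min'_le
          apply patt_subset nstar (insert nstar (g k u)) w₁
          rw [hpatts]
          exact hm₂
        · apply Finset.min'_le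
          apply patt_subset nstar (insert nstar (g k u)) w₂
          rw [← hpatts]
          exact hm₁
      have hpg : w₁.filter (fun i => nstar + (w₁.filter (· < i)).card ∈ g k u) =
          w₂.filter (fun i => nstar + (w₂.filter (· < i)).card ∈ g k u) := by
        have : patt nstar (g k u) w₁ = patt nstar (g k u) w₂ := by
          rw [hp₁, hp₂, hpatts, hmineq]
        exact this
      apply hc k hk u hu w₁ hw₁ w₂ hw₂ hpg
      intro _
      rw [← Finset.coe_min' hne₁, ← Finset.coe_min' hne₂, hmineq]

/-- Reconstruction data for the counting argument. -/
private def Psi (no nstar kstar : ℕ) (A'' : Finset ℕ) {α : Type}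
    (f : ℕ → Finset ℕ → α) (g : ℕ → Finset ℕ → Finset ℕ) (h : ℕ → Finset ℕ → ℕ)
    (t : ℕ × Finset ℕ × Finset ℕ × Finset ℕ × ℕ × Option ℕ × Finset ℕ)
    (S : Finset ℕ) : Prop :=
  ∃ (k : ℕ) (u w₁' w₂' S' : Finset ℕ) (ρ₁ : ℕ) (oρ₂ : Option ℕ) (x : ℕ),
    t = (k, enc S' u, enc S' w₁', enc S' w₂', ρ₁, oρ₂, S') ∧
    S = insert x S' ∧ x ∉ S' ∧ u ⊆ S' ∧ w₁' ⊆ S' ∧ w₂' ⊆ S' ∧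
    k < kstar ∧ u ∈ A''.powersetCard nstar ∧
    w₁' ⊆ above A'' u ∧ w₁'.card = no - nstar - 1 ∧
    (nstar + ρ₁ ∈ gset nstar A'' g h k u) ∧
    x ∈ A'' ∧ (∀ a ∈ u, a < x) ∧ x ∉ w₁' ∧ (w₁'.filter (· < x)).card = ρ₁ ∧
    (match oρ₂ with
     | none => f k (u ∪ insert x w₁') = f k (u ∪ w₂')
     | some ρ₂ =>
         w₂' ⊆ above A'' u ∧ w₂'.card = no - nstar - 1 ∧
         (nstar + ρ₂ ∉ gset nstar A'' g h k u) ∧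
         x ∉ w₂' ∧ (w₂'.filter (· < x)).card = ρ₂ ∧
         f k (u ∪ insert x w₁') = f k (u ∪ insert x w₂'))

/-- Two sets reconstructible from the same data coincide. -/
private lemma recon (no nstar kstar : ℕ) (A'' : Finset ℕ) {α : Type}
    (f : ℕ → Finset ℕ → α) (g : ℕ → Finset ℕ → Finset ℕ) (h : ℕ → Finset ℕ → ℕ)
    (hgr : ∀ k < kstar, ∀ u ∈ A''.powersetCard nstar, g k u ⊆ Finset.Ico (nstar + 1) no)
    (htriv : ∀ k < kstar, ∀ u ∈ A''.powersetCard nstar,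
        (∀ ℓ ∈ above A'' u, h k u ≤ ℓ) ∨ (∀ ℓ ∈ A'', ℓ < h k u))
    (hd : ∀ k < kstar, ∀ u ∈ A''.powersetCard nstar, ∀ w₁ w₂ : Finset ℕ, ∀ i j : ℕ,
        w₁ ∪ w₂ ∪ {i, j} ⊆ A'' →
        (∀ x ∈ u, ∀ y ∈ w₁, x < y) → (∀ x ∈ u, x < i) →
        (∀ y ∈ w₁, y < i) → i < j → (∀ y ∈ w₂, j < y) →
        (w₁ ∪ w₂).card = no - nstar - 1 →
        (w₁.Nonempty →
          (f k (u ∪ w₁ ∪ {i} ∪ w₂) = f k (u ∪ w₁ ∪ {j} ∪ w₂) ↔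
            (u ∪ w₁).card ∉ g k u)) ∧
        (w₁ = ∅ →
          (f k (u ∪ {i} ∪ w₂) = f k (u ∪ {j} ∪ w₂) ↔ h k u ≤ i)))
    (t : ℕ × Finset ℕ × Finset ℕ × Finset ℕ × ℕ × Option ℕ × Finset ℕ)
    (S S₂ : Finset ℕ)
    (h1 : Psi no nstar kstar A'' f g h t S) (h2 : Psi no nstar kstar A'' f g h t S₂) :
    S = S₂ := by
  obtain ⟨k, u, w₁', w₂', S', ρ₁, oρ₂, x, htup, hSx, hxS', huS', hw₁S', hw₂S',
    hk, hu, hw₁A, hw₁c, hρ₁g, hxA, hxu, hxw₁, hxr, hP⟩ := h1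
  obtain ⟨k₂, u₂, w₁₂, w₂₂, S₂', ρ₂₁, oρ₂₂, x₂, htup2, hSx2, hxS'2, huS'2, hw₁S'2, hw₂S'2,
    hk2, hu2, hw₁A2, hw₁c2, hρ₁g2, hxA2, hxu2, hxw₁2, hxr2, hP2⟩ := h2
  rw [htup] at htup2
  simp only [Prod.mk.injEq] at htup2
  obtain ⟨hkeq, heu, he1, he2, hρeq, hoeq, hS'eq⟩ := htup2
  subst hkeq
  subst hρeq
  subst hoeq
  subst hS'eq
  have hueq : u = u₂ := enc_inj huS' huS'2 heu
  subst hueq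
  have h1eq : w₁' = w₁₂ := enc_inj hw₁S' hw₁S'2 he1
  subst h1eq
  have h2eq : w₂' = w₂₂ := enc_inj hw₂S' hw₂S'2 he2
  subst h2eq
  have hxeq : x = x₂ := by
    cases oρ₂ with
    | none =>
      rcases lt_trichotomy x x₂ with hlt | heq | hgt
      · exact absurd hρ₁g ((key_core no nstar kstar A'' f g h hgr htriv hd k hk u hu
          w₁' hw₁A hw₁c ρ₁ x x₂ hxA hxA2 hxu hxu2 hxw₁ hxw₁2 hxr hxr2 hlt).mp
            (hP.trans hP2.symm))
      · exact heq
      · exact absurd hρ₁g ((key_core no nstar kstar A'' f g h hgr htriv hd k hk u hu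
          w₁' hw₁A hw₁c ρ₁ x₂ x hxA2 hxA hxu2 hxu hxw₁2 hxw₁ hxr2 hxr hgt).mp
            (hP2.trans hP.symm))
    | some ρ₂ =>
      obtain ⟨hw₂A, hw₂c, hρ₂g, hzw₂, hzr₂, hfz⟩ := hP
      obtain ⟨-, -, -, hz2w₂, hz2r₂, hfz₂⟩ := hP2
      rcases lt_trichotomy x x₂ with hlt | heq | hgt
      · have heq2 : f k (u ∪ insert x w₂') = f k (u ∪ insert x₂ w₂') :=
          (key_core no nstar kstar A'' f g h hgr htriv hd k hk u hu
            w₂' hw₂A hw₂c ρ₂ x x₂ hxA hxA2 hxu hxu2 hzw₂ hz2w₂ hzr₂ hz2r₂ hlt).mpr hρ₂g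
        exact absurd hρ₁g ((key_core no nstar kstar A'' f g h hgr htriv hd k hk u hu
          w₁' hw₁A hw₁c ρ₁ x x₂ hxA hxA2 hxu hxu2 hxw₁ hxw₁2 hxr hxr2 hlt).mp
            (hfz.trans (heq2.trans hfz₂.symm)))
      · exact heq
      · have heq2 : f k (u ∪ insert x₂ w₂') = f k (u ∪ insert x w₂') :=
          (key_core no nstar kstar A'' f g h hgr htriv hd k hk u hu
            w₂' hw₂A hw₂c ρ₂ x₂ x hxA2 hxA hxu2 hxu hz2w₂ hzw₂ hz2r₂ hzr₂ hgt).mpr hρ₂g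
        exact absurd hρ₁g ((key_core no nstar kstar A'' f g h hgr htriv hd k hk u hu
          w₁' hw₁A hw₁c ρ₁ x₂ x hxA2 hxA hxu2 hxu hxw₁2 hxw₁ hxr2 hxr hgt).mp
            (hfz₂.trans (heq2.trans hfz.symm)))
  rw [hSx, hSx2, hxeq]

private lemma choose_ge_self (r : ℕ) (hr : 1 ≤ r) : r ≤ Nat.choose (2 * r - 1) r := by
  have h1 : Nat.choose (2 * r - 1) r = Nat.choose (2 * r - 1) (r - 1) := by
    have h2 : (2 * r - 1) - r = r - 1 := by omega
    rw [← h2]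
    exact (Nat.choose_symm (show r ≤ 2 * r - 1 by omega)).symm
  have h3 : Nat.choose r (r - 1) ≤ Nat.choose (2 * r - 1) (r - 1) :=
    Nat.choose_le_choose _ (by omega)
  have h4 : Nat.choose r (r - 1) = r := by
    have h5 : Nat.choose r (r - 1) = Nat.choose r 1 :=
      Nat.choose_symm (n := r) (k := 1) (by omega)
    rw [h5, Nat.choose_one_right]
  omega

private lemma count_lt (m N nstar r kstar : ℕ)
    (hn : 1 ≤ nstar) (hr : 1 ≤ r) (hk : 1 ≤ kstar) (hm : 1 ≤ m)
    (hsize : m ^ (nstar + 2 * r) * (nstar + 2 * r) * Nat.choose (2 * r - 1) r * kstar ≤ N) :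
    kstar * (Nat.choose (m - 1) nstar * (Nat.choose (m - 1) (r - 1) *
      ((Nat.choose (m - 1) r + Nat.choose (m - 1) (r - 1)) *
        (r * ((r + 1) * Nat.choose N (m - 1)))))) < Nat.choose N m := by
  have hQ1 : 1 ≤ nstar + 2 * r := by omega
  have hchoose1 : 1 ≤ Nat.choose (2 * r - 1) r := Nat.choose_pos (by omega)
  have hmQ : m ≤ m ^ (nstar + 2 * r) := Nat.le_self_pow (by omega) m
  have hmN : m ≤ N := by
    calc m ≤ m ^ (nstar + 2 * r) := hmQ
    _ = m ^ (nstar + 2 * r) * 1 * 1 * 1 := by ring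
    _ ≤ m ^ (nstar + 2 * r) * (nstar + 2 * r) * Nat.choose (2 * r - 1) r * kstar :=
        Nat.mul_le_mul (Nat.mul_le_mul (Nat.mul_le_mul (le_refl _) hQ1) hchoose1) hk
    _ ≤ N := hsize
  -- abbreviations
  set C1 := Nat.choose (m - 1) nstar with hC1
  set C2 := Nat.choose (m - 1) (r - 1) with hC2
  set C3 := Nat.choose (m - 1) r + Nat.choose (m - 1) (r - 1) with hC3
  set CN := Nat.choose N (m - 1) with hCN
  have hCNpos : 0 < CN := Nat.choose_pos (by omega)
  -- bound the combinatorial factors by powers of m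
  have hb1 : C1 ≤ m ^ nstar :=
    le_trans (Nat.choose_le_pow _ _) (Nat.pow_le_pow_left (by omega) _)
  have hb2 : C2 ≤ m ^ (r - 1) :=
    le_trans (Nat.choose_le_pow _ _) (Nat.pow_le_pow_left (by omega) _)
  have hb3 : C3 ≤ m ^ r := by
    have hpas : C3 = Nat.choose m r := by
      obtain ⟨m', rfl⟩ : ∃ m', m = m' + 1 := ⟨m - 1, by omega⟩
      obtain ⟨r', rfl⟩ : ∃ r', r = r' + 1 := ⟨r - 1, by omega⟩
      rw [hC3]
      simp only [Nat.add_sub_cancel]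
      rw [Nat.choose_succ_succ']
      omega
    rw [hpas]
    exact Nat.choose_le_pow _ _
  -- the key numeric inequality
  have hpows : m ^ nstar * (m ^ (r - 1) * (m ^ r * m)) = m ^ (nstar + 2 * r) := by
    rw [← pow_succ, ← pow_add, ← pow_add]
    congr 1
    omega
  have hfac : r * (r + 1) + 1 ≤ (nstar + 2 * r) * Nat.choose (2 * r - 1) r := by
    have h1 := choose_ge_self r hr
    have h2 : 2 * r + 1 ≤ nstar + 2 * r := by omega
    calc r * (r + 1) + 1 ≤ (2 * r + 1) * r := by nlinarith
    _ ≤ (nstar + 2 * r) * Nat.choose (2 * r - 1) r := Nat.mul_le_mul h2 h1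
  have hkey : kstar * (C1 * (C2 * (C3 * (r * (r + 1))))) * m + m ≤ N := by
    have hstep : kstar * (C1 * (C2 * (C3 * (r * (r + 1))))) * m ≤
        m ^ (nstar + 2 * r) * (r * (r + 1)) * kstar := by
      calc kstar * (C1 * (C2 * (C3 * (r * (r + 1))))) * m
          ≤ kstar * (m ^ nstar * (m ^ (r - 1) * (m ^ r * (r * (r + 1))))) * m := by
            gcongr
      _ = m ^ nstar * (m ^ (r - 1) * (m ^ r * m)) * (r * (r + 1)) * kstar := by ring
      _ = m ^ (nstar + 2 * r) * (r * (r + 1)) * kstar := by rw [hpows]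
    have hmfin : m ≤ m ^ (nstar + 2 * r) * kstar := by
      calc m ≤ m ^ (nstar + 2 * r) := hmQ
      _ = m ^ (nstar + 2 * r) * 1 := by ring
      _ ≤ m ^ (nstar + 2 * r) * kstar := by gcongr
    have htot : m ^ (nstar + 2 * r) * (r * (r + 1)) * kstar + m ^ (nstar + 2 * r) * kstar ≤ N := by
      calc m ^ (nstar + 2 * r) * (r * (r + 1)) * kstar + m ^ (nstar + 2 * r) * kstar
          = m ^ (nstar + 2 * r) * (r * (r + 1) + 1) * kstar := by ring
      _ ≤ m ^ (nstar + 2 * r) * ((nstar + 2 * r) * Nat.choose (2 * r - 1) r) * kstar := by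
          gcongr
      _ = m ^ (nstar + 2 * r) * (nstar + 2 * r) * Nat.choose (2 * r - 1) r * kstar := by ring
      _ ≤ N := hsize
    exact le_trans (Nat.add_le_add hstep hmfin) htot
  -- conclude
  have hrec : Nat.choose N m * m = CN * (N - (m - 1)) := by
    rw [hCN]
    obtain ⟨m', hm'⟩ : ∃ m', m = m' + 1 := ⟨m - 1, by omega⟩
    subst hm'
    simp only [Nat.add_sub_cancel]
    rw [Nat.choose_succ_right_eq]
  have hYm : kstar * (C1 * (C2 * (C3 * (r * (r + 1))))) * m < N - (m - 1) := by omega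
  have hfin : (kstar * (C1 * (C2 * (C3 * (r * (r + 1))))) * CN) * m < Nat.choose N m * m := by
    calc (kstar * (C1 * (C2 * (C3 * (r * (r + 1))))) * CN) * m
        = CN * (kstar * (C1 * (C2 * (C3 * (r * (r + 1))))) * m) := by ring
    _ < CN * (N - (m - 1)) := mul_lt_mul_of_pos_left hYm hCNpos
    _ = Nat.choose N m * m := hrec.symm
  have := Nat.lt_of_mul_lt_mul_right hfin
  calc kstar * (C1 * (C2 * (C3 * (r * ((r + 1) * CN)))))
      = kstar * (C1 * (C2 * (C3 * (r * (r + 1))))) * CN := by ring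
  _ < Nat.choose N m := this

/-- Claim 1.5 (random homogenization). The corrected canonical pattern
`g'_k(u)` is `g_k(u)` if `h_k(u)` is at most every member of `A''` above `u`,
and `g_k(u) ∪ {n*}` otherwise. -/
theorem random_homogenization :
    ∀ no nstar kstar : ℕ, 1 ≤ nstar → nstar ≤ no → 1 ≤ kstar →
    ∃ m₀ : ℕ, ∀ m : ℕ, m₀ ≤ m →
    ∀ (A'' : Finset ℕ) (js : ℕ → ℕ),
      (∀ ℓ ℓ', nstar ≤ ℓ → ℓ < ℓ' → ℓ' < no → js ℓ < js ℓ') →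
      (∀ ℓ, nstar ≤ ℓ → ℓ < no → ∀ x ∈ A'', x < js ℓ) →
    ∀ (α : Type) (f : ℕ → Finset ℕ → α)
      (g : ℕ → Finset ℕ → Finset ℕ) (h : ℕ → Finset ℕ → ℕ),
      -- g_k(u) ⊆ {n*+1, …, n⊗−1}
      (∀ k < kstar, ∀ u ∈ A''.powersetCard nstar, g k u ⊆ Finset.Ico (nstar + 1) no) →
      -- (triv): h_k(u) ≤ min{ℓ ∈ A'' : ℓ > max u} or h_k(u) > max A''
      (∀ k < kstar, ∀ u ∈ A''.powersetCard nstar,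
        (∀ ℓ ∈ above A'' u, h k u ≤ ℓ) ∨ (∀ ℓ ∈ A'', ℓ < h k u)) →
      -- (c)
      (∀ k < kstar, ∀ u ∈ A''.powersetCard nstar,
        ∀ w₁ ∈ (above A'' u).powersetCard (no - nstar),
        ∀ w₂ ∈ (above A'' u).powersetCard (no - nstar),
          w₁.filter (fun i => nstar + (w₁.filter (· < i)).card ∈ g k u) =
            w₂.filter (fun i => nstar + (w₂.filter (· < i)).card ∈ g k u) →
          ((w₁ ∪ w₂).min < (h k u : WithBot ℕ) → w₁.min = w₂.min) →
          f k (u ∪ w₁) = f k (u ∪ w₂)) →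
      -- (d)
      (∀ k < kstar, ∀ u ∈ A''.powersetCard nstar, ∀ w₁ w₂ : Finset ℕ, ∀ i j : ℕ,
        w₁ ∪ w₂ ∪ {i, j} ⊆ A'' →
        (∀ x ∈ u, ∀ y ∈ w₁, x < y) → (∀ x ∈ u, x < i) →
        (∀ y ∈ w₁, y < i) → i < j → (∀ y ∈ w₂, j < y) →
        (w₁ ∪ w₂).card = no - nstar - 1 →
        (w₁.Nonempty →
          (f k (u ∪ w₁ ∪ {i} ∪ w₂) = f k (u ∪ w₁ ∪ {j} ∪ w₂) ↔
            (u ∪ w₁).card ∉ g k u)) ∧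
        (w₁ = ∅ →
          (f k (u ∪ {i} ∪ w₂) = f k (u ∪ {j} ∪ w₂) ↔ h k u ≤ i))) →
      -- (e)
      (∀ k < kstar, ∀ u₀ ∈ A''.powersetCard nstar, ∀ u₁ ∈ A''.powersetCard nstar,
        Neighbors u₀ u₁ →
        ∀ w ∈ (above A'' (u₀ ∪ u₁)).powersetCard (no - nstar),
          (f k (u₀ ∪ w) = f k (u₁ ∪ w) ↔
           f k (u₀ ∪ (Finset.Ico nstar no).image js) =
             f k (u₁ ∪ (Finset.Ico nstar no).image js))) →
      -- (size)
      m ^ (2 * no - nstar) * (2 * no - nstar) *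
          Nat.choose (2 * (no - nstar) - 1) (no - nstar) * kstar ≤ A''.card →
      ∃ Astar : Finset ℕ, Astar ⊆ A'' ∧ Astar.card = m ∧
        ∀ k < kstar, ∀ u ∈ Astar.powersetCard nstar,
          ∀ w₁ ∈ (above Astar u).powersetCard (no - nstar),
          ∀ w₂ ∈ (above Astar u).powersetCard (no - nstar),
            (f k (u ∪ w₁) = f k (u ∪ w₂) ↔
              w₁.filter (fun i => nstar + (w₁.filter (· < i)).card ∈
                  (if ∀ ℓ ∈ above A'' u, h k u ≤ ℓ then g k u
                   else insert nstar (g k u))) =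
              w₂.filter (fun i => nstar + (w₂.filter (· < i)).card ∈
                  (if ∀ ℓ ∈ above A'' u, h k u ≤ ℓ then g k u
                   else insert nstar (g k u)))) := by
  
  intro no nstar kstar hns hnn hks
  refine ⟨1, ?_⟩
  intro m hm A'' js _ _ α f g h hgr htriv hc hd _ hsize
  classical
  by_cases hr0 : no - nstar = 0
  · -- degenerate case: `w₁ = w₂ = ∅` always.
    have hfac1 : 1 ≤ 2 * no - nstar := by omega
    have hch : 1 ≤ Nat.choose (2 * (no - nstar) - 1) (no - nstar) := Nat.choose_pos (by omega)
    have hmN : m ≤ A''.card := by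
      calc m ≤ m ^ (2 * no - nstar) := Nat.le_self_pow (by omega) m
      _ = m ^ (2 * no - nstar) * 1 * 1 * 1 := by ring
      _ ≤ m ^ (2 * no - nstar) * (2 * no - nstar) *
            Nat.choose (2 * (no - nstar) - 1) (no - nstar) * kstar :=
          Nat.mul_le_mul (Nat.mul_le_mul (Nat.mul_le_mul (le_refl _) hfac1) hch) hks
      _ ≤ A''.card := hsize
    obtain ⟨Astar, hsub, hcard⟩ := Finset.exists_subset_card_eq hmN
    refine ⟨Astar, hsub, hcard, ?_⟩
    intro k hk u hu w₁ hw₁ w₂ hw₂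
    have he₁ : w₁ = ∅ := Finset.card_eq_zero.1 (by
      have := (Finset.mem_powersetCard.1 hw₁).2
      omega)
    have he₂ : w₂ = ∅ := Finset.card_eq_zero.1 (by
      have := (Finset.mem_powersetCard.1 hw₂).2
      omega)
    subst he₁
    subst he₂
    simp
  · -- main case
    have hr1 : 1 ≤ no - nstar := by omega
    have hQeq : 2 * no - nstar = nstar + 2 * (no - nstar) := by omega
    rw [hQeq] at hsize
    by_cases hex : ∃ S ∈ A''.powersetCard m, ∀ k < kstar, ∀ u ∈ S.powersetCard nstar,
        ∀ w₁ ∈ (above S u).powersetCard (no - nstar),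
        ∀ w₂ ∈ (above S u).powersetCard (no - nstar),
        (f k (u ∪ w₁) = f k (u ∪ w₂) ↔
          patt nstar (gset nstar A'' g h k u) w₁ = patt nstar (gset nstar A'' g h k u) w₂)
    · obtain ⟨S, hS, hgood⟩ := hex
      obtain ⟨hsub, hcard⟩ := Finset.mem_powersetCard.1 hS
      exact ⟨S, hsub, hcard, hgood⟩
    · exfalso
      push_neg at hex
      set TT := (Finset.range kstar) ×ˢ ((Finset.range (m - 1)).powersetCard nstar ×ˢ
        ((Finset.range (m - 1)).powersetCard (no - nstar - 1) ×ˢ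
        (((Finset.range (m - 1)).powersetCard (no - nstar) ∪
            (Finset.range (m - 1)).powersetCard (no - nstar - 1)) ×ˢ
        (Finset.range (no - nstar) ×ˢ
        ((Finset.insertNone (Finset.range (no - nstar))) ×ˢ
        (A''.powersetCard (m - 1))))))) with hTT
      have hdir := dirLeft no nstar kstar A'' f g h hgr hc
      -- construction of the reconstruction data from a failed instance
      have buildT : ∀ S : Finset ℕ, S ⊆ A'' → S.card = m → ∀ k, k < kstar →
          ∀ u, u ∈ A''.powersetCard nstar → u ⊆ S →
          ∀ w₁, w₁ ⊆ above S u → w₁.card = no - nstar →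
          ∀ w₂, w₂ ⊆ above S u → w₂.card = no - nstar →
          f k (u ∪ w₁) = f k (u ∪ w₂) →
          ∀ x, x ∈ patt nstar (gset nstar A'' g h k u) w₁ →
                x ∉ patt nstar (gset nstar A'' g h k u) w₂ →
          ∃ t, t ∈ TT ∧ Psi no nstar kstar A'' f g h t S := by
        intro S hSsub hScard k hk u huA huS w₁ hw₁S hw₁c w₂ hw₂S hw₂c hfe x hx₁ hx₂
        have hxw₁ : x ∈ w₁ := patt_subset _ _ _ hx₁
        have hxg : nstar + (w₁.filter (· < x)).card ∈ gset nstar A'' g h k u :=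
          (Finset.mem_filter.1 hx₁).2
        have habove : above S u ⊆ above A'' u := Finset.filter_subset_filter _ hSsub
        have hxab : x ∈ above S u := hw₁S hxw₁
        have hxS : x ∈ S := (Finset.mem_filter.1 hxab).1
        have hxA : x ∈ A'' := hSsub hxS
        have hxu : ∀ a ∈ u, a < x := (mem_above.1 (habove hxab)).2
        have hxnu : x ∉ u := fun hcon => absurd (hxu x hcon) (lt_irrefl x)
        have hS'c : (S.erase x).card = m - 1 := by
          rw [Finset.card_erase_of_mem hxS, hScard]
        have hS'sub : S.erase x ⊆ A'' := (Finset.erase_subset _ _).trans hSsub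
        have huS' : u ⊆ S.erase x := Finset.subset_erase.2 ⟨huS, hxnu⟩
        have hw₁sub : w₁ ⊆ S := fun y hy => (Finset.mem_filter.1 (hw₁S hy)).1
        have hw₂sub : w₂ ⊆ S := fun y hy => (Finset.mem_filter.1 (hw₂S hy)).1
        have hw₁'S' : w₁.erase x ⊆ S.erase x := Finset.erase_subset_erase _ hw₁sub
        have hw₂'S' : w₂.erase x ⊆ S.erase x := Finset.erase_subset_erase _ hw₂sub
        have hw₁'A : w₁.erase x ⊆ above A'' u := (Finset.erase_subset _ _).trans (hw₁S.trans habove)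
        have hw₂'A : w₂.erase x ⊆ above A'' u := (Finset.erase_subset _ _).trans (hw₂S.trans habove)
        have hw₁'c : (w₁.erase x).card = no - nstar - 1 := by
          rw [Finset.card_erase_of_mem hxw₁, hw₁c]
        have hrw : ((w₁.erase x).filter (· < x)) = w₁.filter (· < x) := filter_lt_erase w₁ x
        have hρ₁g : nstar + ((w₁.erase x).filter (· < x)).card ∈ gset nstar A'' g h k u := by
          rw [hrw]
          exact hxg
        have hρ₁lt : ((w₁.erase x).filter (· < x)).card < no - nstar := by
          have h1 : ((w₁.erase x).filter (· < x)).card ≤ (w₁.erase x).card :=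
            Finset.card_le_card (Finset.filter_subset _ _)
          omega
        have hxw₁' : x ∉ w₁.erase x := Finset.notMem_erase _ _
        have hSx : S = insert x (S.erase x) := (Finset.insert_erase hxS).symm
        have hxS' : x ∉ S.erase x := Finset.notMem_erase _ _
        have hucard : u.card = nstar := (Finset.mem_powersetCard.1 huA).2
        by_cases hxw₂ : x ∈ w₂
        · have hw₂'c : (w₂.erase x).card = no - nstar - 1 := by
            rw [Finset.card_erase_of_mem hxw₂, hw₂c]
          have hrw₂ : ((w₂.erase x).filter (· < x)) = w₂.filter (· < x) := filter_lt_erase w₂ x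
          have hρ₂lt : ((w₂.erase x).filter (· < x)).card < no - nstar := by
            have h1 : ((w₂.erase x).filter (· < x)).card ≤ (w₂.erase x).card :=
              Finset.card_le_card (Finset.filter_subset _ _)
            omega
          have hρ₂g : nstar + ((w₂.erase x).filter (· < x)).card ∉ gset nstar A'' g h k u := by
            intro hcon
            rw [hrw₂] at hcon
            exact hx₂ (Finset.mem_filter.2 ⟨hxw₂, hcon⟩)
          refine ⟨(k, enc (S.erase x) u, enc (S.erase x) (w₁.erase x),
            enc (S.erase x) (w₂.erase x), ((w₁.erase x).filter (· < x)).card,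
            some (((w₂.erase x).filter (· < x)).card), S.erase x), ?_, ?_⟩
          · rw [hTT]
            simp only [Finset.mem_product]
            refine ⟨Finset.mem_range.2 hk,
              Finset.mem_powersetCard.2 ⟨enc_subset_range huS' hS'c,
                by rw [enc_card huS']; exact hucard⟩,
              Finset.mem_powersetCard.2 ⟨enc_subset_range hw₁'S' hS'c,
                by rw [enc_card hw₁'S']; exact hw₁'c⟩,
              Finset.mem_union_right _ (Finset.mem_powersetCard.2
                ⟨enc_subset_range hw₂'S' hS'c, by rw [enc_card hw₂'S']; exact hw₂'c⟩),
              Finset.mem_range.2 hρ₁lt, ?_,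
              Finset.mem_powersetCard.2 ⟨hS'sub, hS'c⟩⟩
            rw [Finset.mem_insertNone]
            intro a ha
            rw [Option.mem_def, Option.some.injEq] at ha
            subst ha
            exact Finset.mem_range.2 hρ₂lt
          · refine ⟨k, u, w₁.erase x, w₂.erase x, S.erase x,
              ((w₁.erase x).filter (· < x)).card,
              some (((w₂.erase x).filter (· < x)).card), x,
              rfl, hSx, hxS', huS', hw₁'S', hw₂'S', hk, huA, hw₁'A, hw₁'c, hρ₁g,
              hxA, hxu, hxw₁', rfl, ?_⟩
            refine ⟨hw₂'A, hw₂'c, hρ₂g, Finset.notMem_erase _ _, rfl, ?_⟩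
            rw [Finset.insert_erase hxw₁, Finset.insert_erase hxw₂]
            exact hfe
        · have hw₂'eq : w₂.erase x = w₂ := Finset.erase_eq_of_notMem hxw₂
          have hw₂'c : (w₂.erase x).card = no - nstar := by rw [hw₂'eq, hw₂c]
          refine ⟨(k, enc (S.erase x) u, enc (S.erase x) (w₁.erase x),
            enc (S.erase x) (w₂.erase x), ((w₁.erase x).filter (· < x)).card,
            none, S.erase x), ?_, ?_⟩
          · rw [hTT]
            simp only [Finset.mem_product]
            refine ⟨Finset.mem_range.2 hk,
              Finset.mem_powersetCard.2 ⟨enc_subset_range huS' hS'c,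
                by rw [enc_card huS']; exact hucard⟩,
              Finset.mem_powersetCard.2 ⟨enc_subset_range hw₁'S' hS'c,
                by rw [enc_card hw₁'S']; exact hw₁'c⟩,
              Finset.mem_union_left _ (Finset.mem_powersetCard.2
                ⟨enc_subset_range hw₂'S' hS'c, by rw [enc_card hw₂'S']; exact hw₂'c⟩),
              Finset.mem_range.2 hρ₁lt, ?_,
              Finset.mem_powersetCard.2 ⟨hS'sub, hS'c⟩⟩
            rw [Finset.mem_insertNone]
            intro a ha
            exact absurd ha (by simp)
          · refine ⟨k, u, w₁.erase x, w₂.erase x, S.erase x,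
              ((w₁.erase x).filter (· < x)).card, none, x,
              rfl, hSx, hxS', huS', hw₁'S', hw₂'S', hk, huA, hw₁'A, hw₁'c, hρ₁g,
              hxA, hxu, hxw₁', rfl, ?_⟩
            show f k (u ∪ insert x (w₁.erase x)) = f k (u ∪ w₂.erase x)
            rw [Finset.insert_erase hxw₁, hw₂'eq]
            exact hfe
      -- every m-subset admits reconstruction data
      have key : ∀ S : Finset ℕ, S ∈ A''.powersetCard m →
          ∃ t, t ∈ TT ∧ Psi no nstar kstar A'' f g h t S := by
        intro S hS
        obtain ⟨hSsub, hScard⟩ := Finset.mem_powersetCard.1 hS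
        obtain ⟨k, hk, u, hu, w₁, hw₁, w₂, hw₂, hniff⟩ := hex S hS
        obtain ⟨huS, hucard⟩ := Finset.mem_powersetCard.1 hu
        have huA : u ∈ A''.powersetCard nstar :=
          Finset.mem_powersetCard.2 ⟨huS.trans hSsub, hucard⟩
        have habove : above S u ⊆ above A'' u := Finset.filter_subset_filter _ hSsub
        obtain ⟨hw₁S, hw₁c⟩ := Finset.mem_powersetCard.1 hw₁
        obtain ⟨hw₂S, hw₂c⟩ := Finset.mem_powersetCard.1 hw₂
        have hw₁A : w₁ ∈ (above A'' u).powersetCard (no - nstar) :=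
          Finset.mem_powersetCard.2 ⟨hw₁S.trans habove, hw₁c⟩
        have hw₂A : w₂ ∈ (above A'' u).powersetCard (no - nstar) :=
          Finset.mem_powersetCard.2 ⟨hw₂S.trans habove, hw₂c⟩
        have hfp : f k (u ∪ w₁) = f k (u ∪ w₂) ∧ patt nstar (gset nstar A'' g h k u) w₁ ≠
            patt nstar (gset nstar A'' g h k u) w₂ := by
          rcases hniff with h1 | ⟨hF, hP⟩
          · exact h1
          · exact absurd (hdir k hk u huA w₁ hw₁A w₂ hw₂A hP) hF
        obtain ⟨hfe, hpne⟩ := hfp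
        by_cases hone : ∃ x, x ∈ patt nstar (gset nstar A'' g h k u) w₁ ∧
            x ∉ patt nstar (gset nstar A'' g h k u) w₂
        · obtain ⟨x, hx1, hx2⟩ := hone
          exact buildT S hSsub hScard k hk u huA huS w₁ hw₁S hw₁c w₂ hw₂S hw₂c hfe x hx1 hx2
        · push_neg at hone
          have hrev : ∃ x, x ∈ patt nstar (gset nstar A'' g h k u) w₂ ∧
              x ∉ patt nstar (gset nstar A'' g h k u) w₁ := by
            by_contra h2
            push_neg at h2
            exact hpne (Finset.Subset.antisymm hone h2)
          obtain ⟨x, hx1, hx2⟩ := hrev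
          exact buildT S hSsub hScard k hk u huA huS w₂ hw₂S hw₂c w₁ hw₁S hw₁c hfe.symm x hx1 hx2
      -- cardinality bound
      have hTTcard : TT.card = kstar * (Nat.choose (m - 1) nstar *
          (Nat.choose (m - 1) (no - nstar - 1) *
            ((((Finset.range (m - 1)).powersetCard (no - nstar) ∪
               (Finset.range (m - 1)).powersetCard (no - nstar - 1)).card) *
              ((no - nstar) * (((no - nstar) + 1) * Nat.choose A''.card (m - 1)))))) := by
        rw [hTT]
        simp only [Finset.card_product, Finset.card_powersetCard, Finset.card_range,
          Finset.card_insertNone]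
      have hUle : (((Finset.range (m - 1)).powersetCard (no - nstar) ∪
          (Finset.range (m - 1)).powersetCard (no - nstar - 1)).card) ≤
          Nat.choose (m - 1) (no - nstar) + Nat.choose (m - 1) (no - nstar - 1) := by
        refine le_trans (Finset.card_union_le _ _) ?_
        rw [Finset.card_powersetCard, Finset.card_powersetCard, Finset.card_range]
      have hbound : TT.card < (A''.powersetCard m).card := by
        rw [Finset.card_powersetCard]
        calc TT.card ≤ kstar * (Nat.choose (m - 1) nstar *
            (Nat.choose (m - 1) (no - nstar - 1) *
              ((Nat.choose (m - 1) (no - nstar) + Nat.choose (m - 1) (no - nstar - 1)) *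
                ((no - nstar) * (((no - nstar) + 1) * Nat.choose A''.card (m - 1)))))) := by
              rw [hTTcard]
              gcongr
        _ < Nat.choose A''.card m :=
            count_lt m A''.card nstar (no - nstar) kstar hns hr1 hks (by omega) hsize
      choose tfun htT htΨ using key
      have hmaps : ∀ S ∈ A''.powersetCard m,
          (fun S => if hS : S ∈ A''.powersetCard m then tfun S hS else
            ((0, ∅, ∅, ∅, 0, none, ∅) :
              ℕ × Finset ℕ × Finset ℕ × Finset ℕ × ℕ × Option ℕ × Finset ℕ)) S ∈ TT := by
        intro S hS
        simp only [dif_pos hS]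
        exact htT S hS
      obtain ⟨S₁, hS₁, S₂, hS₂, hne, heq⟩ :=
        Finset.exists_ne_map_eq_of_card_lt_of_maps_to hbound hmaps
      rw [dif_pos hS₁, dif_pos hS₂] at heq
      refine hne (recon no nstar kstar A'' f g h hgr htriv hd (tfun S₁ hS₁) S₁ S₂
        (htΨ S₁ hS₁) ?_)
      rw [heq]
      exact htΨ S₂ hS₂
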